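/- Over the alphabet A = {0,1,2,3,4,5,6} with p = 4, the set Λ of normalized words that are proper prefixes of minimal squares of period at most 4 is exactly {ε, 0, 01, 010, 0102, 01020, 010201, 0102010, 012, 0120, 01201, 0121, 01210, 012101, 0121012, 0123, 01230, 012301, 0123012}. -/

import Mathlib

open scoped Classical

/-- `w` contains a factor that is a square of period between `lo` and `hi`. -/
def HasSq {A : Type*} (lo hi : ℕ) (w : List A) : Prop :=
  ∃ u : List A, lo ≤ u.length ∧ u.length ≤ hi ∧ (u ++ u) <:+: w

/-- `w` is a square of period between `lo` and `hi`. -/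
def IsSq {A : Type*} (lo hi : ℕ) (w : List A) : Prop :=
  ∃ u : List A, lo ≤ u.length ∧ u.length ≤ hi ∧ w = u ++ u

/-- `w` is a minimal square of period between `lo` and `hi`: it is such a square and no
proper factor of it is such a square. -/
def MinSq {A : Type*} (lo hi : ℕ) (w : List A) : Prop :=
  IsSq lo hi w ∧ ∀ f : List A, f <:+: w → f ≠ w → ¬ IsSq lo hi f

/-- A word is normalized if it is lexicographically least among its images under
permutations of the alphabet. -/
def Normalized {A : Type*} [LinearOrder A] (w : List A) : Prop :=
  ∀ π : Equiv.Perm A, ¬ List.Lex (· < ·) (w.map π) w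

/-- `Λ`: the set of normalized words that are proper prefixes of minimal squares of
period between `lo` and `hi`. -/
def Lam {A : Type*} [LinearOrder A] (lo hi : ℕ) : Set (List A) :=
  {w | Normalized w ∧ ∃ s : List A, MinSq lo hi s ∧ w <+: s ∧ w ≠ s}

/-- `Λ(w)`: the longest element of `Λ` that is, up to a permutation of the alphabet,
a suffix of `w`. -/
noncomputable def lamOf {A : Type*} [LinearOrder A] (lo hi : ℕ) (w : List A) : List A :=
  if h : ∃ v : List A,
      (v ∈ Lam lo hi ∧ ∃ π : Equiv.Perm A, v.map π <:+ w) ∧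
      ∀ v' : List A, (v' ∈ Lam lo hi ∧ ∃ π : Equiv.Perm A, v'.map π <:+ w) →
        v'.length ≤ v.length
  then h.choose else []

/-! ### Auxiliary material -/

theorem isSq_iff' {A : Type*} (lo hi : ℕ) (w : List A) :
    IsSq lo hi w ↔ (lo ≤ w.length / 2 ∧ w.length / 2 ≤ hi ∧
      w = w.take (w.length / 2) ++ w.take (w.length / 2)) := by
  constructor
  · rintro ⟨u, h1, h2, rfl⟩
    have hl : (u ++ u).length = 2 * u.length := by simp [List.length_append]; ring
    have h : (u ++ u).length / 2 = u.length := by omega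
    rw [h]
    refine ⟨h1, h2, ?_⟩
    rw [List.take_append_of_le_length le_rfl, List.take_length]
  · rintro ⟨h1, h2, h3⟩
    refine ⟨w.take (w.length / 2), ?_, ?_, h3⟩ <;>
      · rw [List.length_take]; omega

instance {A : Type*} [DecidableEq A] (lo hi : ℕ) (w : List A) : Decidable (IsSq lo hi w) :=
  decidable_of_iff' _ (isSq_iff' lo hi w)

theorem minSq_iff' {A : Type*} (lo hi : ℕ) (w : List A) :
    MinSq lo hi w ↔ (IsSq lo hi w ∧
      ∀ t ∈ w.tails, ∀ f ∈ t.inits, f ≠ w → ¬ IsSq lo hi f) := by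
  unfold MinSq
  refine and_congr_right fun _ => ⟨fun h t ht f hf => ?_, fun h f hf => ?_⟩
  · exact h f (List.infix_iff_prefix_suffix.2
      ⟨t, (List.mem_inits _ _).1 hf, (List.mem_tails _ _).1 ht⟩)
  · obtain ⟨t, hp, hs⟩ := List.infix_iff_prefix_suffix.1 hf
    exact h t ((List.mem_tails _ _).2 hs) f ((List.mem_inits _ _).2 hp)

instance {A : Type*} [DecidableEq A] (lo hi : ℕ) (w : List A) : Decidable (MinSq lo hi w) :=
  decidable_of_iff' _ (minSq_iff' lo hi w)

/-- The "restricted growth" condition relative to a set of already-seen letters. -/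
def Cr (seen : Finset (Fin 7)) (w : List (Fin 7)) : Prop :=
  ∀ i (hi : i < w.length), ∀ x : Fin 7, x < w[i] → x ∈ seen ∨ x ∈ w.take i

instance (seen : Finset (Fin 7)) (w : List (Fin 7)) : Decidable (Cr seen w) := by
  unfold Cr; infer_instance

lemma cr_cons (seen : Finset (Fin 7)) (a : Fin 7) (t : List (Fin 7)) :
    Cr seen (a :: t) ↔ (∀ v : Fin 7, v < a → v ∈ seen) ∧ Cr (insert a seen) t := by
  constructor
  · intro h
    constructor
    · intro v hv
      rcases h 0 (by simp) v (by simpa using hv) with h' | h'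
      · exact h'
      · simp at h'
    · intro i hi x hx
      rcases h (i+1) (by simpa using Nat.succ_lt_succ hi) x (by simpa using hx) with h' | h'
      · exact Or.inl (Finset.mem_insert_of_mem h')
      · rw [List.take_succ_cons] at h'
        rcases List.mem_cons.1 h' with rfl | h'
        · exact Or.inl (Finset.mem_insert_self _ _)
        · exact Or.inr h'
  · rintro ⟨h1, h2⟩ i hi x hx
    cases i with
    | zero => exact Or.inl (h1 x (by simpa using hx))
    | succ i =>
      rcases h2 i (by simpa using hi) x (by simpa using hx) with h' | h'
      · rcases Finset.mem_insert.1 h' with rfl | h'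
        · exact Or.inr (by simp [List.take_succ_cons])
        · exact Or.inl h'
      · exact Or.inr (by simp [List.take_succ_cons, h'])

lemma aux1 (π : Equiv.Perm (Fin 7)) :
    ∀ (w : List (Fin 7)) (seen : Finset (Fin 7)), (∀ v ∈ seen, π v = v) →
      Cr seen w → ¬ List.Lex (· < ·) (w.map π) w := by
  intro w
  induction w with
  | nil => intro seen _ _ h; simp at h
  | cons a t ih =>
    intro seen hfix hC hlex
    rw [cr_cons] at hC
    rw [List.map_cons] at hlex
    generalize hx : π a = pa at hlex
    cases hlex with
    | rel h =>
      have h1 : pa ∈ seen := hC.1 _ h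
      have h2 := hfix _ h1
      rw [← hx] at h2
      have : pa = a := by rw [← hx]; exact π.injective h2
      rw [this] at h
      exact lt_irrefl _ h
    | cons h =>
      refine ih (insert a seen) ?_ hC.2 h
      intro v hv
      rcases Finset.mem_insert.1 hv with rfl | hv
      · exact hx
      · exact hfix _ hv

lemma aux2 : ∀ (w : List (Fin 7)) (seen : Finset (Fin 7)),
    (∀ a ∈ seen, ∀ b : Fin 7, b < a → b ∈ seen) → ¬ Cr seen w →
    ∃ π : Equiv.Perm (Fin 7), (∀ v ∈ seen, π v = v) ∧ List.Lex (· < ·) (w.map π) w := by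
  intro w
  induction w with
  | nil =>
    intro seen _ h
    exact absurd (fun i hi => absurd hi (by simp at hi)) h
  | cons a t ih =>
    intro seen hdc hnC
    by_cases hall : ∀ v : Fin 7, v < a → v ∈ seen
    · have ht : ¬ Cr (insert a seen) t := fun h => hnC ((cr_cons _ _ _).2 ⟨hall, h⟩)
      have hdc' : ∀ x ∈ insert a seen, ∀ b : Fin 7, b < x → b ∈ insert a seen := by
        intro x hx b hb
        rcases Finset.mem_insert.1 hx with rfl | hx
        · exact Finset.mem_insert_of_mem (hall b hb)
        · exact Finset.mem_insert_of_mem (hdc x hx b hb)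
      obtain ⟨π, hfix, hlex⟩ := ih _ hdc' ht
      refine ⟨π, fun v hv => hfix v (Finset.mem_insert_of_mem hv), ?_⟩
      rw [List.map_cons]
      have ha : π a = a := hfix a (Finset.mem_insert_self _ _)
      rw [ha]
      exact List.Lex.cons hlex
    · push_neg at hall
      obtain ⟨v, hv1, hv2⟩ := hall
      have hane : a ∉ seen := fun h => hv2 (hdc a h v hv1)
      refine ⟨Equiv.swap a v, ?_, ?_⟩
      · intro x hx
        exact Equiv.swap_apply_of_ne_of_ne (fun h => hane (h ▸ hx)) (fun h => hv2 (h ▸ hx))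
      · rw [List.map_cons, Equiv.swap_apply_left]
        exact List.Lex.rel hv1

lemma normalized_iff (w : List (Fin 7)) : Normalized w ↔ Cr ∅ w := by
  constructor
  · intro h
    by_contra hC
    obtain ⟨π, _, hlex⟩ := aux2 w ∅ (by simp) hC
    exact h π hlex
  · intro h π
    exact aux1 π w ∅ (by simp) h

lemma cr_take (w : List (Fin 7)) (n : ℕ) (h : Cr ∅ w) : Cr ∅ (w.take n) := by
  intro i hi x hx
  have hi' : i < w.length := lt_of_lt_of_le hi (by simp [List.length_take])
  have hg : (w.take n)[i] = w[i]'hi' := List.getElem_take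
  rw [hg] at hx
  rcases h i hi' x hx with h' | h'
  · exact Or.inl h'
  · refine Or.inr ?_
    rw [List.take_take]
    have : min i n = i := by
      simp [List.length_take] at hi; omega
    rw [this]
    exact h'

lemma cr_prefix {v w : List (Fin 7)} (hp : v <+: w) (h : Cr ∅ w) : Cr ∅ v := by
  obtain ⟨t, rfl⟩ := hp
  have := cr_take (v ++ t) v.length h
  simpa using this

lemma lam_intro {w s : List (Fin 7)} (h1 : Cr ∅ w) (h2 : MinSq 1 4 s) (h3 : w <+: s)
    (h4 : w ≠ s) : w ∈ Lam 1 4 :=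
  ⟨(normalized_iff w).2 h1, s, h2, h3, h4⟩

lemma not_lam_factor {f w u : List (Fin 7)} (hmin : MinSq 1 4 (u ++ u)) (hpre : w <+: u ++ u)
    (hlt : w.length < (u ++ u).length) (hf : f <:+: w) (hsq : IsSq 1 4 f) : False := by
  refine hmin.2 f (hf.trans hpre.isInfix) (fun h => ?_) hsq
  have := hf.length_le
  rw [h] at this
  omega

lemma small (w : List (Fin 7)) (hl : w.length ≤ 3) (hC : Cr ∅ w) :
    w ∈ [([] : List (Fin 7)), [0], [0,0], [0,1], [0,0,0], [0,0,1], [0,1,0], [0,1,1], [0,1,2]] := by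
  rcases w with _ | ⟨a, _ | ⟨b, _ | ⟨c, _ | ⟨d, t⟩⟩⟩⟩
  · decide
  · exact (show ∀ a : Fin 7, Cr ∅ [a] → [a] ∈ _ by decide) a hC
  · exact (show ∀ a b : Fin 7, Cr ∅ [a,b] → [a,b] ∈ _ by decide) a b hC
  · exact (show ∀ a b c : Fin 7, Cr ∅ [a,b,c] → [a,b,c] ∈ _ by decide) a b c hC
  · simp at hl; omega

set_option maxHeartbeats 1000000 in
lemma key3 : ∀ a b c : Fin 7, Cr ∅ [a,b,c] →
    MinSq 1 4 ([a,b,c] ++ [a,b,c]) → ∀ k, k < 6 →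
    Cr ∅ (([a,b,c] ++ [a,b,c]).take k) →
    (([a,b,c] ++ [a,b,c]).take k) ∈
      [([] : List (Fin 7)), [0], [0, 1], [0, 1, 0], [0, 1, 0, 2], [0, 1, 0, 2, 0],
       [0, 1, 0, 2, 0, 1], [0, 1, 0, 2, 0, 1, 0], [0, 1, 2], [0, 1, 2, 0], [0, 1, 2, 0, 1],
       [0, 1, 2, 1], [0, 1, 2, 1, 0], [0, 1, 2, 1, 0, 1], [0, 1, 2, 1, 0, 1, 2], [0, 1, 2, 3],
       [0, 1, 2, 3, 0], [0, 1, 2, 3, 0, 1], [0, 1, 2, 3, 0, 1, 2]] := by decide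

set_option maxHeartbeats 4000000 in
lemma key4 : ∀ a b c d : Fin 7, Cr ∅ [a,b,c,d] →
    MinSq 1 4 ([a,b,c,d] ++ [a,b,c,d]) → ∀ k, k < 8 →
    Cr ∅ (([a,b,c,d] ++ [a,b,c,d]).take k) →
    (([a,b,c,d] ++ [a,b,c,d]).take k) ∈
      [([] : List (Fin 7)), [0], [0, 1], [0, 1, 0], [0, 1, 0, 2], [0, 1, 0, 2, 0],
       [0, 1, 0, 2, 0, 1], [0, 1, 0, 2, 0, 1, 0], [0, 1, 2], [0, 1, 2, 0], [0, 1, 2, 0, 1],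
       [0, 1, 2, 1], [0, 1, 2, 1, 0], [0, 1, 2, 1, 0, 1], [0, 1, 2, 1, 0, 1, 2], [0, 1, 2, 3],
       [0, 1, 2, 3, 0], [0, 1, 2, 3, 0, 1], [0, 1, 2, 3, 0, 1, 2]] := by decide

lemma length_eq_four {l : List (Fin 7)} (h : l.length = 4) :
    ∃ a b c d, l = [a, b, c, d] := by
  rcases l with _ | ⟨a, _ | ⟨b, _ | ⟨c, _ | ⟨d, _ | ⟨e, t⟩⟩⟩⟩⟩ <;>
    simp only [List.length] at h <;> first
      | omega
      | exact ⟨a, b, c, d, rfl⟩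

theorem stmt_11 :
    Lam (A := Fin 7) 1 4 =
      ({[], [0], [0, 1], [0, 1, 0], [0, 1, 0, 2], [0, 1, 0, 2, 0], [0, 1, 0, 2, 0, 1],
        [0, 1, 0, 2, 0, 1, 0], [0, 1, 2], [0, 1, 2, 0], [0, 1, 2, 0, 1], [0, 1, 2, 1],
        [0, 1, 2, 1, 0], [0, 1, 2, 1, 0, 1], [0, 1, 2, 1, 0, 1, 2], [0, 1, 2, 3],
        [0, 1, 2, 3, 0], [0, 1, 2, 3, 0, 1], [0, 1, 2, 3, 0, 1, 2]} :
        Set (List (Fin 7))) := by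
  ext w
  simp only [Set.mem_insert_iff, Set.mem_singleton_iff]
  constructor
  · rintro ⟨hnorm, s, hmin, hpre, hne⟩
    have hC : Cr ∅ w := (normalized_iff w).1 hnorm
    obtain ⟨u, hu1, hu4, rfl⟩ := hmin.1
    have hlt : w.length < (u ++ u).length :=
      lt_of_le_of_ne hpre.length_le (fun h => hne (hpre.eq_of_length h))
    have hlen2 : (u ++ u).length = u.length + u.length := by simp
    by_cases h3 : w.length ≤ 3
    · have hmem := small w h3 hC
      simp only [List.mem_cons, List.not_mem_nil, or_false] at hmem
      rcases hmem with rfl | rfl | rfl | rfl | rfl | rfl | rfl | rfl | rfl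
      · exact Or.inl rfl
      · exact Or.inr (Or.inl rfl)
      · exact absurd (not_lam_factor hmin hpre hlt (List.infix_refl _) (by decide)) not_false
      · exact Or.inr (Or.inr (Or.inl rfl))
      · exact absurd (not_lam_factor hmin hpre hlt (by decide : [(0:Fin 7),0] <:+: [0,0,0])
          (by decide)) not_false
      · exact absurd (not_lam_factor hmin hpre hlt (by decide : [(0:Fin 7),0] <:+: [0,0,1])
          (by decide)) not_false
      · exact Or.inr (Or.inr (Or.inr (Or.inl rfl)))
      · exact absurd (not_lam_factor hmin hpre hlt (by decide : [(1:Fin 7),1] <:+: [0,1,1])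
          (by decide)) not_false
      · exact Or.inr (Or.inr (Or.inr (Or.inr (Or.inr (Or.inr (Or.inr (Or.inr (Or.inl rfl))))))))
    · push_neg at h3
      have hn3 : 3 ≤ u.length := by omega
      have hu : u = (u ++ u).take u.length := by
        rw [List.take_append_of_le_length le_rfl, List.take_length]
      have hupre : u <+: w := by
        rw [List.prefix_iff_eq_take.1 hpre]
        exact List.prefix_take_iff.2 ⟨List.prefix_append u u, by omega⟩
      have hCu : Cr ∅ u := cr_prefix hupre hC
      have hw : w = (u ++ u).take w.length := List.prefix_iff_eq_take.1 hpre
      have hcase : u.length = 3 ∨ u.length = 4 := by omega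
      rcases hcase with h | h
      · obtain ⟨a, b, c, rfl⟩ := List.length_eq_three.1 h
        have h19 := key3 a b c hCu hmin w.length (by omega) (hw ▸ hC)
        rw [← hw] at h19
        simpa using h19
      · obtain ⟨a, b, c, d, rfl⟩ := length_eq_four h
        have h19 := key4 a b c d hCu hmin w.length (by omega) (hw ▸ hC)
        rw [← hw] at h19
        simpa using h19
  · intro h
    rcases h with rfl | rfl | rfl | rfl | rfl | rfl | rfl | rfl | rfl | rfl | rfl | rfl | rfl |
      rfl | rfl | rfl | rfl | rfl | rfl
    · exact lam_intro (by decide) (show MinSq 1 4 [0,0] by decide) (by decide) (by decide)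
    · exact lam_intro (by decide) (show MinSq 1 4 [0,0] by decide) (by decide) (by decide)
    · exact lam_intro (by decide) (show MinSq 1 4 [0,1,0,1] by decide) (by decide) (by decide)
    · exact lam_intro (by decide) (show MinSq 1 4 [0,1,0,1] by decide) (by decide) (by decide)
    · exact lam_intro (by decide) (show MinSq 1 4 [0,1,0,2,0,1,0,2] by decide) (by decide)
        (by decide)
    · exact lam_intro (by decide) (show MinSq 1 4 [0,1,0,2,0,1,0,2] by decide) (by decide)
        (by decide)
    · exact lam_intro (by decide) (show MinSq 1 4 [0,1,0,2,0,1,0,2] by decide) (by decide)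
        (by decide)
    · exact lam_intro (by decide) (show MinSq 1 4 [0,1,0,2,0,1,0,2] by decide) (by decide)
        (by decide)
    · exact lam_intro (by decide) (show MinSq 1 4 [0,1,2,0,1,2] by decide) (by decide)
        (by decide)
    · exact lam_intro (by decide) (show MinSq 1 4 [0,1,2,0,1,2] by decide) (by decide)
        (by decide)
    · exact lam_intro (by decide) (show MinSq 1 4 [0,1,2,0,1,2] by decide) (by decide)
        (by decide)
    · exact lam_intro (by decide) (show MinSq 1 4 [0,1,2,1,0,1,2,1] by decide) (by decide)
        (by decide)
    · exact lam_intro (by decide) (show MinSq 1 4 [0,1,2,1,0,1,2,1] by decide) (by decide)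
        (by decide)
    · exact lam_intro (by decide) (show MinSq 1 4 [0,1,2,1,0,1,2,1] by decide) (by decide)
        (by decide)
    · exact lam_intro (by decide) (show MinSq 1 4 [0,1,2,1,0,1,2,1] by decide) (by decide)
        (by decide)
    · exact lam_intro (by decide) (show MinSq 1 4 [0,1,2,3,0,1,2,3] by decide) (by decide)
        (by decide)
    · exact lam_intro (by decide) (show MinSq 1 4 [0,1,2,3,0,1,2,3] by decide) (by decide)
        (by decide)
    · exact lam_intro (by decide) (show MinSq 1 4 [0,1,2,3,0,1,2,3] by decide) (by decide)
        (by decide)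
    · exact lam_intro (by decide) (show MinSq 1 4 [0,1,2,3,0,1,2,3] by decide) (by decide)
        (by decide)
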